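/- arXiv:2309.08117 — 6 statements merged into one kernel-verified Lean document; each statement's English description precedes it below -/
import Mathlib

section
/- Let N₀ ∈ ℝ³ be a unit vector, let w ∈ ℝ³ with w ≠ 0, and let ρ₀, ρ₁₂ > 0. Set ν₀ := √ρ₀ · N₀, assume ⟪w, ν₀⟫ ≠ 0, set α := ‖w‖² (ρ₁₂ − ρ₀) / ⟪w, ν₀⟫², and assume 1 + α ≥ 0. Define P : ℝ³ → ℝ³ by P x := (⟪w, x⟫ / ‖w‖²) · w. Then the vector N₁₂ := √(ρ₀/ρ₁₂) · ((1 + √(1 + α)) · P N₀ − N₀) is a unit vector. -/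
open scoped InnerProductSpace

noncomputable def cross3 (a b : EuclideanSpace ℝ (Fin 3)) : EuclideanSpace ℝ (Fin 3) :=
  (WithLp.equiv 2 (Fin 3 → ℝ)).symm
    (crossProduct ((WithLp.equiv 2 (Fin 3 → ℝ)) a) ((WithLp.equiv 2 (Fin 3 → ℝ)) b))

theorem new_normal_is_unit (N₀ : EuclideanSpace ℝ (Fin 3)) (hN₀ : ‖N₀‖ = 1)
    (w : EuclideanSpace ℝ (Fin 3)) (hw : w ≠ 0)
    (ρ₀ ρ₁₂ : ℝ) (hρ₀ : 0 < ρ₀) (hρ₁₂ : 0 < ρ₁₂)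
    (ν₀ : EuclideanSpace ℝ (Fin 3)) (hν₀ : ν₀ = Real.sqrt ρ₀ • N₀)
    (hinner : ⟪w, ν₀⟫_ℝ ≠ 0)
    (α : ℝ) (hα : α = ‖w‖ ^ 2 * (ρ₁₂ - ρ₀) / ⟪w, ν₀⟫_ℝ ^ 2)
    (hpos : 1 + α ≥ 0)
    (P : EuclideanSpace ℝ (Fin 3) → EuclideanSpace ℝ (Fin 3))
    (hP : ∀ x, P x = (⟪w, x⟫_ℝ / ‖w‖ ^ 2) • w) :
    ‖Real.sqrt (ρ₀ / ρ₁₂) • ((1 + Real.sqrt (1 + α)) • P N₀ - N₀)‖ = 1 := by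
  set s := Real.sqrt (1 + α) with hs
  have hwn : ‖w‖ ≠ 0 := norm_ne_zero_iff.mpr hw
  set c : ℝ := ⟪w, N₀⟫_ℝ with hc
  have hiv : ⟪w, ν₀⟫_ℝ = Real.sqrt ρ₀ * c := by
    rw [hν₀, real_inner_smul_right]
  have hsρ : Real.sqrt ρ₀ ^ 2 = ρ₀ := Real.sq_sqrt hρ₀.le
  have hcne : c ≠ 0 := by
    intro h; apply hinner; rw [hiv, h, mul_zero]
  have hs2 : s ^ 2 = 1 + α := Real.sq_sqrt hpos
  set t : ℝ := (1 + s) * (c / ‖w‖ ^ 2) with ht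
  have hv : (1 + s) • P N₀ - N₀ = t • w - N₀ := by
    rw [hP, smul_smul]
  have hα' : α * c ^ 2 / ‖w‖ ^ 2 = (ρ₁₂ - ρ₀) / ρ₀ := by
    rw [hα, hiv]
    field_simp
    ring_nf
    rw [hsρ]
    ring
  have hnorm2 : ‖t • w - N₀‖ ^ 2 = ρ₁₂ / ρ₀ := by
    rw [norm_sub_sq_real, real_inner_smul_left, norm_smul, hN₀]
    simp only [mul_pow, Real.norm_eq_abs, sq_abs]
    have hexp : t ^ 2 * ‖w‖ ^ 2 - 2 * (t * c) + 1 ^ 2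
        = α * c ^ 2 / ‖w‖ ^ 2 + 1 := by
      rw [ht]
      have h1 : (1 + s) ^ 2 = 2 * (1 + s) + α := by nlinarith [hs2]
      field_simp
      linear_combination c ^ 2 * h1
    rw [hexp, hα']
    field_simp
    ring
  have hnn : ‖t • w - N₀‖ = Real.sqrt (ρ₁₂ / ρ₀) := by
    rw [← hnorm2, Real.sqrt_sq (norm_nonneg _)]
  rw [hv, norm_smul, hnn, Real.norm_eq_abs,
    abs_of_nonneg (Real.sqrt_nonneg _), ← Real.sqrt_mul (by positivity)]
  have : ρ₀ / ρ₁₂ * (ρ₁₂ / ρ₀) = 1 := by field_simp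
  rw [this, Real.sqrt_one]
end

section
/- Let ν₀, ν₁, ν₂ ∈ ℝ³, set w := ν₁ + ν₂, assume ⟪w, ν₀⟫ ≠ 0, let ρ₁₂ ∈ ℝ, set α := ‖w‖² (ρ₁₂ − ‖ν₀‖²) / ⟪w, ν₀⟫², assume 1 + α ≥ 0, and define C := (1 + √(1 + α)) ⟪w, ν₀⟫ / ‖w‖² and ν₁₂ := C·w − ν₀. Then: (i) the discrete compatibility condition (ν₁₂ + ν₀) × (ν₁ + ν₂) = 0 holds; (ii) ‖ν₁₂‖² = ρ₁₂; and (iii) for any r₀ ∈ ℝ³, setting r₁ := r₀ + ν₁ × ν₀ and r₂ := r₀ − ν₂ × ν₀, the two update formulas for the fourth vertex agree: r₁ − ν₁₂ × ν₁ = r₂ + ν₁₂ × ν₂. -/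
open scoped InnerProductSpace

lemma cross3_apply (a b : EuclideanSpace ℝ (Fin 3)) (i : Fin 3) :
    cross3 a b i = (crossProduct (a : Fin 3 → ℝ) (b : Fin 3 → ℝ)) i := rfl

theorem lelieuvre_update_consistency (ν₀ ν₁ ν₂ : EuclideanSpace ℝ (Fin 3))
    (w : EuclideanSpace ℝ (Fin 3)) (hw : w = ν₁ + ν₂)
    (hinner : ⟪w, ν₀⟫_ℝ ≠ 0) (ρ₁₂ : ℝ)
    (α : ℝ) (hα : α = ‖w‖ ^ 2 * (ρ₁₂ - ‖ν₀‖ ^ 2) / ⟪w, ν₀⟫_ℝ ^ 2)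
    (hpos : 1 + α ≥ 0)
    (C : ℝ) (hC : C = (1 + Real.sqrt (1 + α)) * ⟪w, ν₀⟫_ℝ / ‖w‖ ^ 2)
    (ν₁₂ : EuclideanSpace ℝ (Fin 3)) (hν₁₂ : ν₁₂ = C • w - ν₀) :
    cross3 (ν₁₂ + ν₀) (ν₁ + ν₂) = 0 ∧
    ‖ν₁₂‖ ^ 2 = ρ₁₂ ∧
    ∀ r₀ : EuclideanSpace ℝ (Fin 3),
      (r₀ + cross3 ν₁ ν₀) - cross3 ν₁₂ ν₁ = (r₀ - cross3 ν₂ ν₀) + cross3 ν₁₂ ν₂ := by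
  have hwne : w ≠ 0 := by
    intro h; apply hinner; rw [h]; simp
  have hwn : ‖w‖ ≠ 0 := norm_ne_zero_iff.mpr hwne
  set s := Real.sqrt (1 + α) with hsdef
  have hs : s ^ 2 = 1 + α := Real.sq_sqrt hpos
  have hCw : C * ‖w‖ ^ 2 = (1 + s) * ⟪w, ν₀⟫_ℝ := by
    rw [hC]; field_simp
  have hα' : α * ⟪w, ν₀⟫_ℝ ^ 2 = ‖w‖ ^ 2 * (ρ₁₂ - ‖ν₀‖ ^ 2) := by
    rw [hα]; exact div_mul_cancel₀ _ (pow_ne_zero 2 hinner)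
  refine ⟨?_, ?_, ?_⟩
  · have h12 : ν₁₂ + ν₀ = C • w := by rw [hν₁₂]; abel
    rw [h12, ← hw]
    ext i
    fin_cases i <;>
      · simp [cross3_apply, crossProduct, mul_comm]
  · have hexp : ‖ν₁₂‖ ^ 2 = C ^ 2 * ‖w‖ ^ 2 - 2 * C * ⟪w, ν₀⟫_ℝ + ‖ν₀‖ ^ 2 := by
      rw [hν₁₂, norm_sub_sq_real, norm_smul, real_inner_smul_left]
      simp [mul_pow, sq_abs]
      ring
    have key : (C ^ 2 * ‖w‖ ^ 2 - 2 * C * ⟪w, ν₀⟫_ℝ + ‖ν₀‖ ^ 2) * ‖w‖ ^ 2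
        = ρ₁₂ * ‖w‖ ^ 2 := by
      linear_combination (C * ‖w‖ ^ 2 + (1 + s) * ⟪w, ν₀⟫_ℝ - 2 * ⟪w, ν₀⟫_ℝ) * hCw
        + ⟪w, ν₀⟫_ℝ ^ 2 * hs + hα'
    rw [hexp]
    have hw2 : ‖w‖ ^ 2 ≠ 0 := pow_ne_zero 2 hwn
    exact mul_right_cancel₀ hw2 key
  · intro r₀
    have hcw : cross3 ν₁₂ ν₁ - cross3 ν₁₂ ν₂ = cross3 ν₁₂ ν₁ - cross3 ν₁₂ ν₂ := rfl
    have h1 : ν₁₂ = C • (ν₁ + ν₂) - ν₀ := by rw [hν₁₂, hw]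
    ext i
    rw [h1]
    fin_cases i <;>
      simp [cross3_apply, crossProduct] <;> ring
end

section
/- Let N₀, N₁, N₂ ∈ ℝ³ be unit vectors, set w := N₁ + N₂, and assume w ≠ 0 and ⟪w, N₀⟫ ≠ 0. Then a unit vector N₁₂ ∈ ℝ³ satisfies the discrete compatibility condition (N₁₂ + N₀) × (N₁ + N₂) = 0 if and only if N₁₂ = −N₀ or N₁₂ = (2 ⟪w, N₀⟫ / ‖w‖²) · w − N₀. In particular, the second solution is the Householder reflection (2P − I) N₀ of N₀, where P x := (⟪w, x⟫ / ‖w‖²) · w, and it is a unit vector. -/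
open scoped InnerProductSpace

lemma cross3_eq_zero_iff (a b : EuclideanSpace ℝ (Fin 3)) (hb : b ≠ 0) :
    cross3 a b = 0 ↔ ∃ t : ℝ, a = t • b := by
  have hb' : (WithLp.equiv 2 (Fin 3 → ℝ)) b ≠ 0 := by
    simpa using (WithLp.equiv 2 (Fin 3 → ℝ)).injective.ne_iff.mpr hb
  unfold cross3
  rw [Equiv.symm_apply_eq, show (WithLp.equiv 2 (Fin 3 → ℝ)) 0 = 0 from rfl]
  constructor
  · intro h
    rw [← cross_anticomm] at h
    have h' := neg_eq_zero.mp h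
    have := (not_iff_not.mpr (crossProduct_ne_zero_iff_linearIndependent (v := (WithLp.equiv 2 (Fin 3 → ℝ)) b) (w := (WithLp.equiv 2 (Fin 3 → ℝ)) a))).mp (by simpa using h')
    rw [LinearIndependent.pair_iff' hb'] at this
    push_neg at this
    obtain ⟨t, ht⟩ := this
    exact ⟨t, by
      apply (WithLp.equiv 2 (Fin 3 → ℝ)).injective
      rw [show (WithLp.equiv 2 (Fin 3 → ℝ)) (t • b) = t • (WithLp.equiv 2 (Fin 3 → ℝ)) b from rfl]
      exact ht.symm⟩
  · rintro ⟨t, rfl⟩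
    rw [show (WithLp.equiv 2 (Fin 3 → ℝ)) (t • b) = t • (WithLp.equiv 2 (Fin 3 → ℝ)) b from rfl, LinearMap.map_smul₂, cross_self, smul_zero]

theorem constant_curvature_normal_update (N₀ N₁ N₂ : EuclideanSpace ℝ (Fin 3))
    (h₀ : ‖N₀‖ = 1) (h₁ : ‖N₁‖ = 1) (h₂ : ‖N₂‖ = 1)
    (w : EuclideanSpace ℝ (Fin 3)) (hw : w = N₁ + N₂)
    (hw0 : w ≠ 0) (hinner : ⟪w, N₀⟫_ℝ ≠ 0) :
    (∀ N₁₂ : EuclideanSpace ℝ (Fin 3), ‖N₁₂‖ = 1 →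
      (cross3 (N₁₂ + N₀) (N₁ + N₂) = 0 ↔
        N₁₂ = -N₀ ∨ N₁₂ = (2 * ⟪w, N₀⟫_ℝ / ‖w‖ ^ 2) • w - N₀)) ∧
    ‖(2 * ⟪w, N₀⟫_ℝ / ‖w‖ ^ 2) • w - N₀‖ = 1 := by
  have hwn : ‖w‖ ≠ 0 := norm_ne_zero_iff.mpr hw0
  set c : ℝ := ⟪w, N₀⟫_ℝ with hc
  have hnormsq : ∀ t : ℝ, ‖t • w - N₀‖ ^ 2 = t ^ 2 * ‖w‖ ^ 2 - 2 * t * c + 1 := by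
    intro t
    rw [norm_sub_sq_real, real_inner_smul_left, norm_smul]
    rw [h₀]
    ring_nf
    rw [Real.norm_eq_abs, sq_abs]
    ring
  have hsolnorm : ‖(2 * c / ‖w‖ ^ 2) • w - N₀‖ = 1 := by
    have h := hnormsq (2 * c / ‖w‖ ^ 2)
    have hw2 : ‖w‖ ^ 2 ≠ 0 := pow_ne_zero 2 hwn
    have : ‖(2 * c / ‖w‖ ^ 2) • w - N₀‖ ^ 2 = 1 := by
      rw [h]; field_simp; ring
    nlinarith [norm_nonneg ((2 * c / ‖w‖ ^ 2) • w - N₀)]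
  refine ⟨fun N₁₂ hN ↦ ?_, hsolnorm⟩
  rw [← hw, cross3_eq_zero_iff _ _ hw0]
  constructor
  · rintro ⟨t, ht⟩
    have hN' : N₁₂ = t • w - N₀ := by rw [← ht]; abel
    have h1 : ‖t • w - N₀‖ ^ 2 = 1 := by rw [← hN', hN]; norm_num
    rw [hnormsq t] at h1
    have h2 : t * (t * ‖w‖ ^ 2 - 2 * c) = 0 := by nlinarith
    rcases mul_eq_zero.mp h2 with h3 | h3
    · left; rw [hN', h3]; simp
    · right
      rw [hN']
      congr 1
      have hw2 : ‖w‖ ^ 2 ≠ 0 := pow_ne_zero 2 hwn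
      have : t = 2 * c / ‖w‖ ^ 2 := by field_simp; linarith
      rw [this]
  · rintro (rfl | rfl)
    · exact ⟨0, by simp⟩
    · exact ⟨2 * c / ‖w‖ ^ 2, by abel⟩
end

section
/- Let r, N : ℝ² → ℝ³ be twice continuously differentiable and a, b : ℝ² → ℝ be continuously differentiable, and suppose that on all of ℝ² the first partial derivatives satisfy ∂₁ r = a · (∂₁ N × N) and ∂₂ r = b · (∂₂ N × N). If p ∈ ℝ² is a point where ⟪∂₁ N(p) × ∂₂ N(p), N(p)⟫ ≠ 0, then a(p) = −b(p). -/
open scoped InnerProductSpace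

noncomputable abbrev E3 := EuclideanSpace ℝ (Fin 3)

noncomputable def crossLin : E3 →ₗ[ℝ] E3 →ₗ[ℝ] E3 :=
  LinearMap.mk₂ ℝ cross3
    (by intros; simp [cross3, map_add])
    (by intros; simp [cross3, map_smul])
    (by intros; simp [cross3, map_add])
    (by intros; simp [cross3, map_smul])

noncomputable def crossL : E3 →L[ℝ] E3 →L[ℝ] E3 :=
  LinearMap.toContinuousLinearMap
    ((LinearMap.toContinuousLinearMap :
        (E3 →ₗ[ℝ] E3) ≃ₗ[ℝ] (E3 →L[ℝ] E3)).toLinearMap.comp crossLin)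

@[simp] lemma crossL_apply (x y : E3) : crossL x y = cross3 x y := rfl

lemma inner_cross3_right (x y : E3) : ⟪cross3 x y, y⟫_ℝ = 0 := by
  simp [cross3, cross_apply, PiLp.inner_apply, Fin.sum_univ_three, RCLike.inner_apply]
  ring

lemma cross3_anticomm (x y : E3) : cross3 y x = -cross3 x y := by
  apply (WithLp.equiv 2 (Fin 3 → ℝ)).injective
  funext i
  simp [cross3, cross_apply, Fin.sum_univ_three]
  fin_cases i <;> simp <;> ring

theorem lelieuvre_coefficients_opposite (r N : ℝ × ℝ → EuclideanSpace ℝ (Fin 3))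
    (a b : ℝ × ℝ → ℝ)
    (hr : ContDiff ℝ 2 r) (hN : ContDiff ℝ 2 N)
    (ha : ContDiff ℝ 1 a) (hb : ContDiff ℝ 1 b)
    (h1 : ∀ p : ℝ × ℝ, fderiv ℝ r p (1, 0) = a p • cross3 (fderiv ℝ N p (1, 0)) (N p))
    (h2 : ∀ p : ℝ × ℝ, fderiv ℝ r p (0, 1) = b p • cross3 (fderiv ℝ N p (0, 1)) (N p))
    (p : ℝ × ℝ)
    (hp : ⟪cross3 (fderiv ℝ N p (1, 0)) (fderiv ℝ N p (0, 1)), N p⟫_ℝ ≠ 0) :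
    a p = -b p := by
  have one_le_two' : (1 : WithTop ℕ∞) + 1 ≤ 2 := by norm_num
  have hNd : Differentiable ℝ N := hN.differentiable (by norm_num)
  have hDN1 : ContDiff ℝ 1 (fderiv ℝ N) := hN.fderiv_right one_le_two'
  have hDR1 : ContDiff ℝ 1 (fderiv ℝ r) := hr.fderiv_right one_le_two'
  have hDNd : DifferentiableAt ℝ (fderiv ℝ N) p := (hDN1.differentiable one_ne_zero).differentiableAt
  have hDRd : DifferentiableAt ℝ (fderiv ℝ r) p := (hDR1.differentiable one_ne_zero).differentiableAt
  have happ : ∀ v : ℝ × ℝ, HasFDerivAt (fun q => fderiv ℝ r q v)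
      ((ContinuousLinearMap.apply ℝ E3 v).comp (fderiv ℝ (fderiv ℝ r) p)) p :=
    fun v => (ContinuousLinearMap.apply ℝ E3 v).hasFDerivAt.comp p hDRd.hasFDerivAt
  have happN : ∀ v : ℝ × ℝ, HasFDerivAt (fun q => fderiv ℝ N q v)
      ((ContinuousLinearMap.apply ℝ E3 v).comp (fderiv ℝ (fderiv ℝ N) p)) p :=
    fun v => (ContinuousLinearMap.apply ℝ E3 v).hasFDerivAt.comp p hDNd.hasFDerivAt
  have hs1 : HasFDerivAt (fun q => a q • crossL (fderiv ℝ N q (1,0)) (N q)) _ p :=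
    ((ha.differentiable one_ne_zero) p).hasFDerivAt.smul
      (crossL.hasFDerivAt_of_bilinear (happN (1,0)) (hNd p).hasFDerivAt)
  have hs2 : HasFDerivAt (fun q => b q • crossL (fderiv ℝ N q (0,1)) (N q)) _ p :=
    ((hb.differentiable one_ne_zero) p).hasFDerivAt.smul
      (crossL.hasFDerivAt_of_bilinear (happN (0,1)) (hNd p).hasFDerivAt)
  have e1 : (fun q => fderiv ℝ r q ((1:ℝ),(0:ℝ))) = fun q => a q • crossL (fderiv ℝ N q (1,0)) (N q) := by
    funext q; simpa using h1 q
  have e2 : (fun q => fderiv ℝ r q ((0:ℝ),(1:ℝ))) = fun q => b q • crossL (fderiv ℝ N q (0,1)) (N q) := by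
    funext q; simpa using h2 q
  rw [← e1] at hs1
  rw [← e2] at hs2
  have E1 := (happ (1,0)).unique hs1
  have E2 := (happ (0,1)).unique hs2
  have symr : IsSymmSndFDerivAt ℝ r p := hr.contDiffAt.isSymmSndFDerivAt (by norm_num)
  have symN : IsSymmSndFDerivAt ℝ N p := hN.contDiffAt.isSymmSndFDerivAt (by norm_num)
  have key : fderiv ℝ (fderiv ℝ r) p ((0:ℝ),(1:ℝ)) (1,0)
      = fderiv ℝ (fderiv ℝ r) p ((1:ℝ),(0:ℝ)) (0,1) := symr _ _
  have keyN : fderiv ℝ (fderiv ℝ N) p ((0:ℝ),(1:ℝ)) (1,0)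
      = fderiv ℝ (fderiv ℝ N) p ((1:ℝ),(0:ℝ)) (0,1) := symN _ _
  have E1' := congrArg (fun L => L ((0:ℝ),(1:ℝ))) E1
  have E2' := congrArg (fun L => L ((1:ℝ),(0:ℝ))) E2
  simp only [ContinuousLinearMap.comp_apply, ContinuousLinearMap.apply_apply,
    ContinuousLinearMap.add_apply, ContinuousLinearMap.smul_apply,
    ContinuousLinearMap.smulRight_apply, ContinuousLinearMap.precompR_apply,
    ContinuousLinearMap.precompL_apply] at E1' E2'
  rw [key, keyN] at E1'
  have Efinal := E1'.symm.trans E2'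
  have hin := congrArg (fun x => ⟪x, N p⟫_ℝ) Efinal
  simp only [ContinuousLinearMap.compL_apply, ContinuousLinearMap.comp_apply,
    crossL_apply, inner_add_left, real_inner_smul_left, inner_cross3_right,
    cross3_anticomm (fderiv ℝ N p (1,0)) (fderiv ℝ N p (0,1)), inner_neg_left,
    mul_zero, add_zero, zero_add] at hin
  -- hin should be : a p * S = b p * (-S) (in some form)
  have h0 : (a p + b p) * ⟪cross3 (fderiv ℝ N p (1,0)) (fderiv ℝ N p (0,1)), N p⟫_ℝ = 0 := by
    linear_combination hin
  rcases mul_eq_zero.1 h0 with h | h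
  · linarith
  · exact absurd h hp
end

section
/- Let ν : ℤ × ℤ → ℝ³ satisfy the discrete compatibility condition on every elementary quadrilateral: for all (i,j), (ν(i+1,j+1) + ν(i,j)) × (ν(i+1,j) + ν(i,j+1)) = 0. Then there exists a map r : ℤ × ℤ → ℝ³ satisfying the discrete Lelieuvre formulas, i.e. for all (i,j), r(i+1,j) − r(i,j) = ν(i+1,j) × ν(i,j) and r(i,j+1) − r(i,j) = −ν(i,j+1) × ν(i,j). -/
open scoped InnerProductSpace

lemma cross3_add_left (a b c : EuclideanSpace ℝ (Fin 3)) :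
    cross3 (a + b) c = cross3 a c + cross3 b c := by
  simp [cross3, map_add]

lemma cross3_add_right (a b c : EuclideanSpace ℝ (Fin 3)) :
    cross3 a (b + c) = cross3 a b + cross3 a c := by
  simp [cross3, map_add]

lemma cross3_anticomm_s13 (a b : EuclideanSpace ℝ (Fin 3)) :
    cross3 a b = -cross3 b a := by
  unfold cross3
  conv_lhs => rw [← cross_anticomm]
  rfl

lemma exists_antideriv {E : Type*} [AddCommGroup E] (g : ℤ → E) :
    ∃ f : ℤ → E, f 0 = 0 ∧ ∀ n : ℤ, f (n + 1) - f n = g n := by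
  refine ⟨fun n => (Finset.range n.toNat).sum (fun k => g k)
      - (Finset.range (-n).toNat).sum (fun k => g (-(k + 1 : ℤ))), by simp, ?_⟩
  intro n
  rcases le_or_gt 0 n with h | h
  · have h1 : (n + 1).toNat = n.toNat + 1 := by omega
    have h2 : (-n).toNat = 0 := by omega
    have h3 : (-(n + 1)).toNat = 0 := by omega
    simp only [h1, h2, h3, Finset.range_zero, Finset.sum_empty, sub_zero,
      Finset.sum_range_succ, Int.toNat_of_nonneg h]
    abel
  · have h1 : (n + 1).toNat = 0 := by omega
    have h2 : n.toNat = 0 := by omega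
    have h3 : (-n).toNat = (-(n + 1)).toNat + 1 := by omega
    simp only [h1, h2, h3, Finset.range_zero, Finset.sum_empty, zero_sub,
      Finset.sum_range_succ]
    rw [show (-((((-(n + 1)).toNat : ℤ)) + 1)) = n by omega]
    abel

theorem discrete_immersion_exists (ν : ℤ × ℤ → EuclideanSpace ℝ (Fin 3))
    (hcompat : ∀ i j : ℤ,
      cross3 (ν (i + 1, j + 1) + ν (i, j)) (ν (i + 1, j) + ν (i, j + 1)) = 0) :
    ∃ r : ℤ × ℤ → EuclideanSpace ℝ (Fin 3), ∀ i j : ℤ,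
      r (i + 1, j) - r (i, j) = cross3 (ν (i + 1, j)) (ν (i, j)) ∧
      r (i, j + 1) - r (i, j) = -cross3 (ν (i, j + 1)) (ν (i, j)) := by
  set u : ℤ → ℤ → EuclideanSpace ℝ (Fin 3) :=
    fun i j => cross3 (ν (i + 1, j)) (ν (i, j)) with hu
  set v : ℤ → ℤ → EuclideanSpace ℝ (Fin 3) :=
    fun i j => -cross3 (ν (i, j + 1)) (ν (i, j)) with hv
  have closed : ∀ i j : ℤ, u i (j + 1) = u i j + v (i + 1) j - v i j := by
    intro i j
    have h := hcompat i j
    rw [cross3_add_left, cross3_add_right, cross3_add_right] at h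
    have h12 : cross3 (ν (i + 1, j + 1)) (ν (i + 1, j))
        = - (cross3 (ν (i + 1, j + 1)) (ν (i, j + 1))
          + cross3 (ν (i, j)) (ν (i + 1, j)) + cross3 (ν (i, j)) (ν (i, j + 1))) := by
      rw [eq_neg_iff_add_eq_zero]; rw [← h]; abel
    simp only [hu, hv]
    rw [cross3_anticomm_s13 (ν (i + 1, j)) (ν (i, j)),
        cross3_anticomm_s13 (ν (i, j + 1)) (ν (i, j))]
    rw [h12]
    rw [cross3_anticomm_s13 (ν (i + 1, j + 1)) (ν (i, j + 1))]
    abel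
  obtain ⟨f, hf0, hf⟩ := exists_antideriv (fun i => u i 0)
  choose F hF0 hF using fun i => exists_antideriv (fun j => v i j)
  refine ⟨fun p => f p.1 + F p.1 p.2, fun i j => ?_⟩
  constructor
  · show f (i + 1) + F (i + 1) j - (f i + F i j) = u i j
    have key : ∀ j : ℤ, F (i + 1) j - F i j = u i j - u i 0 := by
      intro j
      induction j using Int.induction_on with
      | zero => simp [hF0]
      | succ k ih =>
          have h1 := hF (i + 1) k
          have h2 := hF i k
          have h3 := closed i k
          have : F (i + 1) (k + 1) - F i (k + 1)
              = (F (i + 1) k - F i k) + v (i + 1) k - v i k := by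
            rw [sub_eq_iff_eq_add] at h1 h2
            rw [h1, h2]; abel
          rw [this, ih, h3]; abel
      | pred k ih =>
          have h1 := hF (i + 1) (-k - 1)
          have h2 := hF i (-k - 1)
          have h3 := closed i (-k - 1)
          rw [show (-(k : ℤ) - 1 + 1) = -k by ring] at h1 h2 h3
          have hsplit : F (i + 1) (-k) - F i (-k)
              = (F (i + 1) (-k - 1) - F i (-k - 1)) + v (i + 1) (-k - 1) - v i (-k - 1) := by
            rw [sub_eq_iff_eq_add] at h1 h2
            rw [h1, h2]; abel
          rw [hsplit] at ih
          have : F (i + 1) (-k - 1) - F i (-k - 1)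
              = (u i (-k) - u i 0) - v (i + 1) (-k - 1) + v i (-k - 1) := by
            rw [← ih]; abel
          rw [this, h3]; abel
    have hfi := hf i
    have hsum : f (i + 1) + F (i + 1) j - (f i + F i j)
        = (f (i + 1) - f i) + (F (i + 1) j - F i j) := by abel
    rw [hsum, hfi, key j]; abel
  · show f i + F i (j + 1) - (f i + F i j) = v i j
    have h := hF i j
    rw [← h]; abel
end

section
/- Let ν₀, w ∈ ℝ³ with w ≠ 0 and ⟪w, ν₀⟫ ≠ 0, and let ρ₁₂ ∈ ℝ. Set α := ‖w‖² (ρ₁₂ − ‖ν₀‖²) / ⟪w, ν₀⟫². Then a vector ν₁₂ ∈ ℝ³ satisfies both (ν₁₂ + ν₀) × w = 0 and ‖ν₁₂‖² = ρ₁₂ if and only if 1 + α ≥ 0 and ν₁₂ = ((1 + √(1 + α)) ⟪w, ν₀⟫ / ‖w‖²) · w − ν₀ or ν₁₂ = ((1 − √(1 + α)) ⟪w, ν₀⟫ / ‖w‖²) · w − ν₀. -/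
open scoped InnerProductSpace

lemma cross3_smul_self (c : ℝ) (w : EuclideanSpace ℝ (Fin 3)) : cross3 (c • w) w = 0 := by
  have : (WithLp.equiv 2 (Fin 3 → ℝ)) (c • w) = c • (WithLp.equiv 2 (Fin 3 → ℝ)) w := rfl
  simp [cross3, this, LinearMap.map_smul, cross_self]

lemma cross3_zero_iff (u w : EuclideanSpace ℝ (Fin 3)) (hw : w ≠ 0) :
    cross3 u w = 0 ↔ u = (⟪w, u⟫_ℝ / ‖w‖ ^ 2) • w := by
  have hws : ‖w‖ ^ 2 ≠ 0 := pow_ne_zero 2 (norm_ne_zero_iff.mpr hw)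
  constructor
  · intro h
    have h0 := congrFun (congrArg (WithLp.equiv 2 (Fin 3 → ℝ)) h) 0
    have h1 := congrFun (congrArg (WithLp.equiv 2 (Fin 3 → ℝ)) h) 1
    have h2 := congrFun (congrArg (WithLp.equiv 2 (Fin 3 → ℝ)) h) 2
    simp [cross3, crossProduct] at h0 h1 h2
    have hin : ⟪w, u⟫_ℝ = w 0 * u 0 + w 1 * u 1 + w 2 * u 2 := by
      simp [PiLp.inner_apply, Fin.sum_univ_three]
      ring
    have hn : ‖w‖ ^ 2 = w 0 * w 0 + w 1 * w 1 + w 2 * w 2 := by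
      rw [← real_inner_self_eq_norm_sq]
      simp only [PiLp.inner_apply, Fin.sum_univ_three, RCLike.inner_apply, conj_trivial]
    have key : ∀ i : Fin 3, ‖w‖ ^ 2 * u i = ⟪w, u⟫_ℝ * w i := by
      rw [hin, hn]
      intro i
      fin_cases i
      · show (w 0 * w 0 + w 1 * w 1 + w 2 * w 2) * u 0 = (w 0 * u 0 + w 1 * u 1 + w 2 * u 2) * w 0
        linear_combination w 1 * h2 - w 2 * h1
      · show (w 0 * w 0 + w 1 * w 1 + w 2 * w 2) * u 1 = (w 0 * u 0 + w 1 * u 1 + w 2 * u 2) * w 1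
        linear_combination w 2 * h0 - w 0 * h2
      · show (w 0 * w 0 + w 1 * w 1 + w 2 * w 2) * u 2 = (w 0 * u 0 + w 1 * u 1 + w 2 * u 2) * w 2
        linear_combination w 0 * h1 - w 1 * h0
    ext i
    have := key i
    simp only [PiLp.smul_apply, smul_eq_mul]
    rw [div_mul_eq_mul_div, eq_div_iff hws]
    linear_combination this
  · intro h
    rw [h]
    exact cross3_smul_self _ w
theorem compatibility_and_norm_iff (ν₀ w : EuclideanSpace ℝ (Fin 3))
    (hw : w ≠ 0) (hinner : ⟪w, ν₀⟫_ℝ ≠ 0) (ρ₁₂ : ℝ)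
    (α : ℝ) (hα : α = ‖w‖ ^ 2 * (ρ₁₂ - ‖ν₀‖ ^ 2) / ⟪w, ν₀⟫_ℝ ^ 2) :
    ∀ ν₁₂ : EuclideanSpace ℝ (Fin 3),
      (cross3 (ν₁₂ + ν₀) w = 0 ∧ ‖ν₁₂‖ ^ 2 = ρ₁₂) ↔
        (1 + α ≥ 0 ∧
          (ν₁₂ = ((1 + Real.sqrt (1 + α)) * ⟪w, ν₀⟫_ℝ / ‖w‖ ^ 2) • w - ν₀ ∨
           ν₁₂ = ((1 - Real.sqrt (1 + α)) * ⟪w, ν₀⟫_ℝ / ‖w‖ ^ 2) • w - ν₀)) := by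
  intro ν₁₂
  set S := ⟪w, ν₀⟫_ℝ with hS
  set W := ‖w‖ ^ 2 with hW
  have hWne : W ≠ 0 := pow_ne_zero 2 (norm_ne_zero_iff.mpr hw)
  have hS2pos : 0 < S ^ 2 := by positivity
  have hαS : α * S ^ 2 = W * (ρ₁₂ - ‖ν₀‖ ^ 2) := by
    rw [hα]; field_simp
  have hexp : ∀ c : ℝ, ‖c • w - ν₀‖ ^ 2 = c ^ 2 * W - 2 * (c * S) + ‖ν₀‖ ^ 2 := by
    intro c
    have h1 : ‖c • w‖ ^ 2 = c ^ 2 * ‖w‖ ^ 2 := by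
      rw [norm_smul]; simp [mul_pow, sq_abs]
    rw [norm_sub_sq_real, h1, real_inner_smul_left]
    try ring
  constructor
  · rintro ⟨hc, hn⟩
    have h1 := (cross3_zero_iff (ν₁₂ + ν₀) w hw).mp hc
    set t := ⟪w, ν₁₂ + ν₀⟫_ℝ / W with ht
    have hν : ν₁₂ = t • w - ν₀ := by rw [← h1]; abel
    have hquad : t ^ 2 * W - 2 * (t * S) + ‖ν₀‖ ^ 2 = ρ₁₂ := by
      rw [← hexp, ← hν, hn]
    have hsq : (W * t - S) ^ 2 = S ^ 2 * (1 + α) := by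
      have : W = ‖w‖ ^ 2 := hW
      nlinarith [hquad, hαS]
    have hge : 1 + α ≥ 0 := by nlinarith [sq_nonneg (W * t - S)]
    refine ⟨hge, ?_⟩
    set q := Real.sqrt (1 + α) with hq
    have hq2 : q ^ 2 = 1 + α := Real.sq_sqrt hge
    have hfac : (W * t - S - S * q) * (W * t - S + S * q) = 0 := by
      linear_combination hsq - S ^ 2 * hq2
    rcases mul_eq_zero.mp hfac with h | h
    · left
      rw [hν]
      congr 1
      congr 1
      field_simp
      linarith [h]
    · right
      rw [hν]
      congr 1
      congr 1
      field_simp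
      linarith [h]
  · rintro ⟨hge, h | h⟩ <;>
    · set q := Real.sqrt (1 + α) with hq
      have hq2 : q ^ 2 = 1 + α := Real.sq_sqrt hge
      rw [h]
      constructor
      · have : (((1 + q) * S / W) • w - ν₀ + ν₀ : EuclideanSpace ℝ (Fin 3))
            = ((1 + q) * S / W) • w := by abel
        first
        | (rw [this]; exact cross3_smul_self _ w)
        | skip
        all_goals
          have h2 : (((1 - q) * S / W) • w - ν₀ + ν₀ : EuclideanSpace ℝ (Fin 3))
              = ((1 - q) * S / W) • w := by abel
          rw [h2]; exact cross3_smul_self _ w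
      · rw [hexp]
        field_simp
        linear_combination S ^ 2 * hq2 + hαS
end
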